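/- For every k ∈ ℕ and every n ∈ ℕ with (k+1) ∣ n, there exists an n-vertex edge-ordered graph G₀ with minimum degree δ(G₀) ≥ ⌊n/2⌋ − 2 that does not contain a perfect P_k^≤-tiling. -/

import Mathlib

/-- An *edge-ordered graph*: a simple graph together with a real labeling of
pairs of vertices that is injective on the edge set (hence inducing a linear
order of the edges). -/
structure EdgeOrderedGraph (V : Type*) where
  graph : SimpleGraph V
  label : Sym2 V → ℝ
  inj : ∀ e₁ ∈ graph.edgeSet, ∀ e₂ ∈ graph.edgeSet, label e₁ = label e₂ → e₁ = e₂

namespace EdgeOrderedGraph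

/-- `φ` realizes a copy of the edge-ordered graph `F` inside `G`. -/
def IsCopy {W V : Type*} (F : EdgeOrderedGraph W) (G : EdgeOrderedGraph V) (φ : W → V) : Prop :=
  Function.Injective φ ∧
    (∀ a b : W, F.graph.Adj a b → G.graph.Adj (φ a) (φ b)) ∧
    (∀ a b c d : W, F.graph.Adj a b → F.graph.Adj c d →
      F.label s(a, b) < F.label s(c, d) → G.label s(φ a, φ b) < G.label s(φ c, φ d))

/-- `G` contains a copy of `F`. -/
def ContainsCopy {W V : Type*} (G : EdgeOrderedGraph V) (F : EdgeOrderedGraph W) : Prop :=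
  ∃ φ : W → V, IsCopy F G φ

/-- `G` has a collection of vertex-disjoint copies of `F` covering exactly `S`. -/
def HasPerfectTilingOn {W V : Type*} (F : EdgeOrderedGraph W) (G : EdgeOrderedGraph V)
    (S : Set V) : Prop :=
  ∃ T : Set (W → V),
    (∀ φ ∈ T, IsCopy F G φ) ∧
    (∀ φ ∈ T, ∀ w : W, φ w ∈ S) ∧
    ∀ v ∈ S, ∃! p : (W → V) × W, p.1 ∈ T ∧ p.1 p.2 = v

/-- `G` has a perfect `F`-tiling. -/
def HasPerfectTiling {W V : Type*} (F : EdgeOrderedGraph W) (G : EdgeOrderedGraph V) : Prop :=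
  HasPerfectTilingOn F G Set.univ

/-- `F` is Turánable: some complete graph contains a copy of `F` under every edge-ordering. -/
def Turanable {W : Type*} (F : EdgeOrderedGraph W) : Prop :=
  ∃ t : ℕ, ∀ G : EdgeOrderedGraph (Fin t), G.graph = ⊤ → G.ContainsCopy F

/-- `F` is tileable: some complete graph `K_t` with `|F| ∣ t` has a perfect `F`-tiling
under every edge-ordering. -/
def Tileable {W : Type*} [Fintype W] (F : EdgeOrderedGraph W) : Prop :=
  ∃ t : ℕ, 0 < t ∧ Fintype.card W ∣ t ∧
    ∀ G : EdgeOrderedGraph (Fin t), G.graph = ⊤ → HasPerfectTiling F G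

/-- The degree of a vertex in an edge-ordered graph. -/
noncomputable def degree {V : Type*} (G : EdgeOrderedGraph V) (v : V) : ℕ :=
  (G.graph.neighborSet v).ncard

end EdgeOrderedGraph

open EdgeOrderedGraph

/-- The monotone path `P_k^≤` with `k` edges: consecutive edges increase. -/
noncomputable def monotonePath (k : ℕ) : EdgeOrderedGraph (Fin (k + 1)) where
  graph := SimpleGraph.fromRel (fun a b => a.val + 1 = b.val)
  label := Sym2.lift ⟨fun a b => ((min a.val b.val : ℕ) : ℝ), fun a b => by simp [min_comm]⟩
  inj := by
    intro e₁ h₁ e₂ h₂ heq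
    induction e₁ using Sym2.ind with
    | _ a b =>
    induction e₂ using Sym2.ind with
    | _ c d =>
    rw [SimpleGraph.mem_edgeSet, SimpleGraph.fromRel_adj] at h₁ h₂
    simp only [Sym2.lift_mk] at heq
    have hm : min a.val b.val = min c.val d.val := Nat.cast_injective heq
    have hab : a.val ≠ b.val := fun h => h₁.1 (Fin.val_injective h)
    have hcd : c.val ≠ d.val := fun h => h₂.1 (Fin.val_injective h)
    have key : (a.val = c.val ∧ b.val = d.val) ∨ (a.val = d.val ∧ b.val = c.val) := by
      have h12 := h₁.2; have h22 := h₂.2; omega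
    rw [Sym2.eq_iff]
    rcases key with ⟨x, y⟩ | ⟨x, y⟩
    · exact Or.inl ⟨Fin.val_injective x, Fin.val_injective y⟩
    · exact Or.inr ⟨Fin.val_injective x, Fin.val_injective y⟩

/-- Auxiliary: two disjoint cliques (on `val < a` and `val ≥ a`) with an arbitrary
injective edge labeling. -/
noncomputable def twoCliques (n a : ℕ) : EdgeOrderedGraph (Fin n) where
  graph :=
    { Adj := fun v w => v ≠ w ∧ (v.val < a ↔ w.val < a),
      symm := ⟨fun v w h => ⟨h.1.symm, h.2.symm⟩⟩,
      loopless := ⟨fun v h => h.1 rfl⟩ }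
  label := fun e => ((Fintype.equivFin (Sym2 (Fin n)) e : ℕ) : ℝ)
  inj := fun e₁ _ e₂ _ h => (Fintype.equivFin (Sym2 (Fin n))).injective
    (Fin.val_injective (Nat.cast_injective h))

lemma twoCliques_adj (n a : ℕ) (v w : Fin n) :
    (twoCliques n a).graph.Adj v w ↔ v ≠ w ∧ (v.val < a ↔ w.val < a) := Iff.rfl

/-- **Extremal example.** For every `k ≥ 1` and every `n ≥ 1` divisible by `k+1` there is an
`n`-vertex edge-ordered graph with minimum degree at least `⌊n/2⌋ - 2` and no perfect
`P_k^≤`-tiling. -/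
theorem monotonePath_perfect_tiling_extremal (k n : ℕ) (hk : 0 < k) (hn : 0 < n)
    (hdvd : (k + 1) ∣ n) :
    ∃ G₀ : EdgeOrderedGraph (Fin n),
      (∀ v : Fin n, ((n / 2 : ℕ) : ℤ) - 2 ≤ (G₀.degree v : ℤ)) ∧
      ¬ HasPerfectTiling (monotonePath k) G₀ := by
  classical
  have hkn : k + 1 ≤ n := Nat.le_of_dvd hn hdvd
  have hn2 : 2 ≤ n := by omega
  obtain ⟨a, ha1, ha2, hand⟩ : ∃ a : ℕ, a ≤ n / 2 ∧ n / 2 ≤ a + 1 ∧ ¬ (k + 1) ∣ a := by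
    by_cases h : (k + 1) ∣ n / 2
    · refine ⟨n / 2 - 1, by omega, by omega, fun hd => ?_⟩
      have h1 : k + 1 ≤ n / 2 := Nat.le_of_dvd (by omega) h
      have h2 := Nat.dvd_sub h hd
      rw [show n / 2 - (n / 2 - 1) = 1 by omega] at h2
      have h3 := Nat.dvd_one.mp h2
      omega
    · exact ⟨n / 2, le_rfl, by omega, h⟩
  have han : a ≤ n := le_trans ha1 (Nat.div_le_self n 2)
  have hFcard : (Finset.univ.filter fun w : Fin n => w.val < a).card = a := by
    have himg : (Finset.univ.filter fun w : Fin n => w.val < a)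
        = Finset.univ.image (Fin.castLE han) := by
      ext w
      simp only [Finset.mem_filter, Finset.mem_univ, true_and, Finset.mem_image]
      constructor
      · intro hw
        exact ⟨⟨w.val, hw⟩, rfl⟩
      · rintro ⟨x, rfl⟩
        exact x.isLt
    rw [himg, Finset.card_image_of_injective _ (Fin.castLE_injective han),
      Finset.card_univ, Fintype.card_fin]
  have hGcard : (Finset.univ.filter fun w : Fin n => ¬ w.val < a).card = n - a := by
    have hsum := Finset.card_filter_add_card_filter_not
      (s := (Finset.univ : Finset (Fin n))) (p := fun w : Fin n => w.val < a)
    rw [hFcard] at hsum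
    simp only [Finset.card_univ, Fintype.card_fin] at hsum
    omega
  refine ⟨twoCliques n a, ?_, ?_⟩
  · -- minimum degree bound
    intro v
    have hns : (twoCliques n a).graph.neighborSet v
        = ↑((Finset.univ.filter fun w : Fin n => v.val < a ↔ w.val < a).erase v) := by
      ext w
      simp only [SimpleGraph.mem_neighborSet, twoCliques_adj, Finset.coe_erase,
        Set.mem_diff, Finset.mem_coe, Finset.mem_filter, Finset.mem_univ, true_and,
        Set.mem_singleton_iff]
      constructor
      · rintro ⟨h1, h2⟩; exact ⟨h2, fun h => h1 h.symm⟩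
      · rintro ⟨h2, h1⟩; exact ⟨fun h => h1 h.symm, h2⟩
    have hdeg : (twoCliques n a).degree v
        = (Finset.univ.filter fun w : Fin n => v.val < a ↔ w.val < a).card - 1 := by
      rw [EdgeOrderedGraph.degree, hns, Set.ncard_coe_finset,
        Finset.card_erase_of_mem (by simp)]
    rw [hdeg]
    by_cases hv : v.val < a
    · have he : (Finset.univ.filter fun w : Fin n => v.val < a ↔ w.val < a)
          = (Finset.univ.filter fun w : Fin n => w.val < a) := by
        apply Finset.filter_congr; intro w _; simp [hv]
      rw [he, hFcard]
      omega
    · have he : (Finset.univ.filter fun w : Fin n => v.val < a ↔ w.val < a)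
          = (Finset.univ.filter fun w : Fin n => ¬ w.val < a) := by
        apply Finset.filter_congr; intro w _; simp [hv]
      rw [he, hGcard]
      omega
  · -- no perfect tiling
    rintro ⟨T, hcopy, -, hcover⟩
    have hside : ∀ φ ∈ T, ∀ w : Fin (k + 1), ((φ w).val < a ↔ (φ 0).val < a) := by
      intro φ hφ w
      obtain ⟨-, hadj, -⟩ := hcopy φ hφ
      suffices H : ∀ m : ℕ, ∀ hm : m < k + 1, ((φ ⟨m, hm⟩).val < a ↔ (φ 0).val < a) by
        have := H w.val w.isLt
        simpa using this
      intro m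
      induction m with
      | zero => intro hm; rfl
      | succ m ih =>
        intro hm
        have hadjm : (monotonePath k).graph.Adj ⟨m, by omega⟩ ⟨m + 1, hm⟩ := by
          show (SimpleGraph.fromRel fun x y : Fin (k + 1) => x.val + 1 = y.val).Adj _ _
          rw [SimpleGraph.fromRel_adj]
          exact ⟨by simp [Fin.ext_iff], Or.inl rfl⟩
        have hG := ((twoCliques_adj n a _ _).mp (hadj _ _ hadjm)).2
        exact hG.symm.trans (ih (by omega))
    set Sfin : Finset (Fin n) := Finset.univ.filter (fun w : Fin n => w.val < a) with hSfin
    set TS : Finset (Fin (k + 1) → Fin n) :=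
      Finset.univ.filter (fun φ => φ ∈ T ∧ (φ 0).val < a) with hTS
    have hbij : (TS ×ˢ (Finset.univ : Finset (Fin (k + 1)))).card = Sfin.card := by
      refine Finset.card_bij (fun p _ => p.1 p.2) ?_ ?_ ?_
      · intro p hp
        rw [Finset.mem_product, hTS, Finset.mem_filter] at hp
        obtain ⟨⟨-, hpT, hp0⟩, -⟩ := hp
        rw [hSfin, Finset.mem_filter]
        exact ⟨Finset.mem_univ _, (hside p.1 hpT p.2).mpr hp0⟩
      · intro p₁ h₁ p₂ h₂ heq
        rw [Finset.mem_product, hTS, Finset.mem_filter] at h₁ h₂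
        obtain ⟨q, -, huniq⟩ := hcover (p₁.1 p₁.2) (Set.mem_univ _)
        have e₁ : p₁ = q := huniq p₁ ⟨h₁.1.2.1, rfl⟩
        have e₂ : p₂ = q := huniq p₂ ⟨h₂.1.2.1, heq.symm⟩
        rw [e₁, e₂]
      · intro v hv
        rw [hSfin, Finset.mem_filter] at hv
        obtain ⟨p, ⟨hpT, hpv⟩, -⟩ := hcover v (Set.mem_univ v)
        have hp0 : (p.1 0).val < a := (hside p.1 hpT p.2).mp (by rw [hpv]; exact hv.2)
        refine ⟨p, ?_, hpv⟩
        rw [Finset.mem_product, hTS, Finset.mem_filter]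
        exact ⟨⟨Finset.mem_univ _, hpT, hp0⟩, Finset.mem_univ _⟩
    rw [Finset.card_product, Finset.card_univ, Fintype.card_fin] at hbij
    have hSc : Sfin.card = a := hFcard
    exact hand ⟨TS.card, by rw [← hSc, ← hbij, mul_comm]⟩
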